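/- Let i : Z[ζ] → C be an injective ring homomorphism and j : Z[ζ] → K a ring homomorphism into a field K, where Z[ζ] is a ring of cyclotomic integers. Let M be a bounded chain complex of finitely generated free Z[ζ]-modules. Then for every q, dim_C H_q(M ⊗_{Z[ζ], i} C) ≤ dim_K H_q(M ⊗_{Z[ζ], j} K). -/

import Mathlib

set_option synthInstance.maxHeartbeats 1000000

open Matrix Module

/-- From any matrix over a field one can extract `A.rank` linearly independent rows. -/
lemma exists_rows_linearIndependent {F m n : Type*} [Field F] [Fintype m] [Fintype n]
    (A : Matrix m n F) : ∃ f : Fin A.rank → m, LinearIndependent F (fun k => A (f k)) := by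
  classical
  obtain ⟨s, hsub, hspan, hli⟩ := exists_linearIndependent F (Set.range A)
  have hfin : s.Finite := (Set.finite_range A).subset hsub
  haveI : Fintype s := hfin.fintype
  have hcard : s.toFinset.card = A.rank := by
    rw [A.rank_eq_finrank_span_row]
    show s.toFinset.card = finrank F (Submodule.span F (Set.range A))
    rw [← hspan, finrank_span_set_eq_card hli]
  have e : Fin A.rank ≃ s := by
    refine (Fintype.equivFinOfCardEq ?_).symm
    rw [← Set.toFinset_card, hcard]
  choose pre hpre using fun x : s => hsub x.2
  refine ⟨fun k => pre (e k), ?_⟩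
  have : (fun k => A (pre (e k))) = (fun x : s => (x : n → F)) ∘ e := by
    funext k; simp [hpre]
  rw [this]
  exact hli.comp e e.injective


/-- Any matrix over a field has a square `rank × rank` submatrix with nonzero determinant. -/
lemma exists_submatrix_det_ne_zero {F m n : Type*} [Field F] [Fintype m] [Fintype n]
    (A : Matrix m n F) :
    ∃ (f : Fin A.rank → m) (g : Fin A.rank → n), (A.submatrix f g).det ≠ 0 := by
  classical
  obtain ⟨f, hf⟩ := exists_rows_linearIndependent A
  set B : Matrix (Fin A.rank) n F := A.submatrix f id with hB
  have hBrank : B.rank = A.rank := by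
    have : LinearIndependent F B := hf
    exact this.rank_matrix.trans (Fintype.card_fin _)
  have hBT : Bᵀ.rank = A.rank := by rw [Matrix.rank_transpose, hBrank]
  obtain ⟨g, hg⟩ := exists_rows_linearIndependent Bᵀ
  set g' : Fin A.rank → n := fun k => g (finCongr hBT.symm k) with hg'
  have hcols : LinearIndependent F (fun k : Fin A.rank => Bᵀ (g' k)) :=
    hg.comp _ (finCongr hBT.symm).injective
  refine ⟨f, g', ?_⟩
  have hsq : LinearIndependent F (fun k : Fin A.rank => (A.submatrix f g')ᵀ k) := by
    have heq : (fun k : Fin A.rank => (A.submatrix f g')ᵀ k)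
        = fun k : Fin A.rank => Bᵀ (g' k) := by
      funext k l; simp [hB]
    rw [heq]; exact hcols
  have hunit : IsUnit (A.submatrix f g') := Matrix.linearIndependent_cols_iff_isUnit.mp hsq
  have := (Matrix.isUnit_iff_isUnit_det _).mp hunit
  exact this.ne_zero

/-- If a matrix has an `r × r` submatrix with nonzero determinant, its rank is at least `r`. -/
lemma le_rank_of_submatrix_det_ne_zero {F m n : Type*} [Field F] [Fintype m] [Fintype n]
    [DecidableEq m] [DecidableEq n]
    (A : Matrix m n F) {r : ℕ} (f : Fin r → m) (g : Fin r → n)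
    (h : (A.submatrix f g).det ≠ 0) : r ≤ A.rank := by
  classical
  have hsub : r = (A.submatrix f g).rank := by
    rw [Matrix.rank_of_isUnit _ ((Matrix.isUnit_iff_isUnit_det _).mpr h.isUnit)]
    simp
  have h1 : A.submatrix f g = ((1 : Matrix m m F).submatrix f (Equiv.refl m)) * (A.submatrix id g) := by
    rw [Matrix.one_submatrix_mul]
    simp [Matrix.submatrix_submatrix]
  have h2 : A.submatrix id g = A * ((1 : Matrix n n F).submatrix (Equiv.refl n) g) := by
    rw [Matrix.mul_submatrix_one]
    simp
  calc r = (A.submatrix f g).rank := hsub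
    _ ≤ (A.submatrix id g).rank := by rw [h1]; exact Matrix.rank_mul_le_right _ _
    _ ≤ A.rank := by rw [h2]; exact Matrix.rank_mul_le_left _ _

/-- Key comparison: the rank after base change along any ring hom `j` is at most the rank
after base change along an injective ring hom `i` into a field. -/
lemma rank_map_le_rank_map {R F F' m n : Type*} [CommRing R] [Field F] [Field F']
    [Fintype m] [Fintype n] [DecidableEq m] [DecidableEq n]
    (i : R →+* F) (hi : Function.Injective i) (j : R →+* F')
    (A : Matrix m n R) : (A.map j).rank ≤ (A.map i).rank := by
  classical
  obtain ⟨f, g, h⟩ := exists_submatrix_det_ne_zero (A.map j)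
  have hjd : ((A.submatrix f g).map j).det ≠ 0 := by
    simpa [Matrix.submatrix_map] using h
  have hdetj : ((A.submatrix f g).map j).det = j ((A.submatrix f g).det) := by
    rw [RingHom.map_det, RingHom.mapMatrix_apply]
  have hdeti : ((A.submatrix f g).map i).det = i ((A.submatrix f g).det) := by
    rw [RingHom.map_det, RingHom.mapMatrix_apply]
  have hRd : (A.submatrix f g).det ≠ 0 := by
    intro h0
    apply hjd
    rw [hdetj, h0, map_zero]
  have hid : ((A.map i).submatrix f g).det ≠ 0 := by
    rw [Matrix.submatrix_map, hdeti]
    intro h0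
    exact hRd (hi (by rw [h0, map_zero]))
  exact le_rank_of_submatrix_det_ne_zero _ f g hid

/-- Dimension formula for the homology of two composable matrix maps over a field. -/
lemma finrank_homologyAt_eq {F l m o : Type*} [Field F]
    [Fintype l] [Fintype m] [Fintype o] [DecidableEq m] [DecidableEq o]
    (A : Matrix l m F) (B : Matrix m o F) (hAB : A * B = 0) :
    Module.finrank F (LinearMap.ker (Matrix.toLin' A) ⧸
        (LinearMap.range (Matrix.toLin' B)).comap (LinearMap.ker (Matrix.toLin' A)).subtype)
      + B.rank + A.rank = Fintype.card m := by
  classical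
  set g := Matrix.toLin' A
  set f := Matrix.toLin' B
  have hle : LinearMap.range f ≤ LinearMap.ker g := by
    rintro x ⟨y, rfl⟩
    have : g (f y) = 0 := by
      have hcomp : g ∘ₗ f = Matrix.toLin' (A * B) := (Matrix.toLin'_mul A B).symm
      have : g ∘ₗ f = 0 := by rw [hcomp, hAB]; simp
      exact DFunLike.congr_fun this y
    simpa [LinearMap.mem_ker] using this
  have hS : Module.finrank F ((LinearMap.range f).comap (LinearMap.ker g).subtype)
      = Module.finrank F (LinearMap.range f) :=
    (Submodule.comapSubtypeEquivOfLe hle).finrank_eq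
  have hquot : Module.finrank F (LinearMap.ker g ⧸
        (LinearMap.range f).comap (LinearMap.ker g).subtype)
      + Module.finrank F ((LinearMap.range f).comap (LinearMap.ker g).subtype)
      = Module.finrank F (LinearMap.ker g) :=
    Submodule.finrank_quotient_add_finrank _
  have hker : Module.finrank F (LinearMap.range g) + Module.finrank F (LinearMap.ker g)
      = Module.finrank F (m → F) := LinearMap.finrank_range_add_finrank_ker g
  have hrB : B.rank = Module.finrank F (LinearMap.range f) := by
    rw [Matrix.rank, ← Matrix.toLin'_apply']
  have hrA : A.rank = Module.finrank F (LinearMap.range g) := by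
    rw [Matrix.rank, ← Matrix.toLin'_apply']
  have hm : Module.finrank F (m → F) = Fintype.card m := Module.finrank_pi F
  omega



/-- Cohomology of a two-step piece `M --f--> N --g--> P` of a complex:
`ker g / im f`. -/
abbrev homologyAt {K M N P : Type*} [CommRing K]
    [AddCommGroup M] [AddCommGroup N] [AddCommGroup P]
    [Module K M] [Module K N] [Module K P]
    (f : M →ₗ[K] N) (g : N →ₗ[K] P) :=
  LinearMap.ker g ⧸ (LinearMap.range f).comap (LinearMap.ker g).subtype

/-- Let `R` (e.g. a ring `ℤ[ζ]` of cyclotomic integers) be an integral domain with an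
injective ring homomorphism `i : R → ℂ` and a ring homomorphism `j : R → K` to a field
`K`.  Let `M` be a bounded chain complex of finitely generated free `R`-modules,
presented by matrices `d q` (the boundary map from degree `q+1` to degree `q`).
Then for every `q`, `dim_ℂ H_q(M ⊗_{R,i} ℂ) ≤ dim_K H_q(M ⊗_{R,j} K)`. -/
theorem homology_dim_base_change (R K : Type*) [CommRing R] [IsDomain R] [Field K]
    (i : R →+* ℂ) (hi : Function.Injective i) (j : R →+* K)
    (n : ℤ → ℕ) (d : ∀ q : ℤ, Matrix (Fin (n q)) (Fin (n (q + 1))) R)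
    (hdd : ∀ q : ℤ, d q * d (q + 1) = 0)
    (hbdd : ∃ a b : ℤ, ∀ q : ℤ, q < a ∨ b < q → n q = 0) :
    ∀ q : ℤ,
      Module.finrank ℂ
          (homologyAt (Matrix.toLin' ((d (q + 1)).map i)) (Matrix.toLin' ((d q).map i))) ≤
      Module.finrank K
          (homologyAt (Matrix.toLin' ((d (q + 1)).map j)) (Matrix.toLin' ((d q).map j))) := by
  intro q
  have hmuli : ((d q).map i) * ((d (q + 1)).map i) = 0 := by
    rw [← Matrix.map_mul, hdd q]; simp
  have hmulj : ((d q).map j) * ((d (q + 1)).map j) = 0 := by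
    rw [← Matrix.map_mul, hdd q]; simp
  have hi' := finrank_homologyAt_eq ((d q).map i) ((d (q + 1)).map i) hmuli
  have hj' := finrank_homologyAt_eq ((d q).map j) ((d (q + 1)).map j) hmulj
  have h1 : ((d q).map j).rank ≤ ((d q).map i).rank := rank_map_le_rank_map i hi j _
  have h2 : ((d (q + 1)).map j).rank ≤ ((d (q + 1)).map i).rank := rank_map_le_rank_map i hi j _
  unfold homologyAt
  omega
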